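/- The class of languages accepted by quasi-deterministic all-final 1-limited (qDF1) sensing 5'→3' WK automata properly includes the class of languages accepted by quasi-deterministic stateless 1-limited (qDN1) sensing 5'→3' WK automata: every qDN1 automaton is a qDF1 automaton, and the language ba* + a* = { baⁿ : n ≥ 0 } ∪ { aⁿ : n ≥ 0 } is accepted by a qDF1 sensing 5'→3' WK automaton but by no quasi-deterministic stateless sensing 5'→3' WK automaton. -/

import Mathlib

open Computability

/-- The two-letter alphabet `{a, b}`. -/
inductive Letter : Type
  | a : Letter
  | b : Letter
deriving DecidableEq

instance instFintypeLetter : Fintype Letter :=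
  ⟨{Letter.a, Letter.b}, fun x => by cases x <;> simp⟩

open Letter

/-- A sensing 5'→3' Watson-Crick automaton over the alphabet `T` with state set `Q`:
an initial state `q0`, a set `F` of final states, and a transition mapping
`δ : Q × T* × T* → 2^Q` that is nonempty for only finitely many triples. -/
structure WKAutomaton (T : Type) (Q : Type) where
  q0 : Q
  F : Set Q
  δ : Q → List T → List T → Set Q
  finite_delta : {t : Q × List T × List T | (δ t.1 t.2.1 t.2.2).Nonempty}.Finite

namespace WKAutomaton

variable {T Q : Type}

/-- One computation step on configurations:
`(q, x ++ w' ++ y) ⇒ (q', w')` iff `q' ∈ δ q x y`. -/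
def Step (A : WKAutomaton T Q) (c c' : Q × List T) : Prop :=
  ∃ x y : List T, c.2 = x ++ c'.2 ++ y ∧ c'.1 ∈ A.δ c.1 x y

/-- The accepted language: words `w` with `(q₀, w) ⇒* (q_F, λ)` for some final `q_F`. -/
def Lang (A : WKAutomaton T Q) : Set (List T) :=
  {w | ∃ qf ∈ A.F, Relation.ReflTransGen A.Step (A.q0, w) (qf, [])}

/-- `A` is deterministic: in every configuration at most one computation step
(choice of `x`, `y`, `w'`, `q'`) is applicable. -/
def Deterministic (A : WKAutomaton T Q) : Prop :=
  ∀ (q : Q) (w x₁ y₁ w₁ x₂ y₂ w₂ : List T) (q₁ q₂ : Q),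
    w = x₁ ++ w₁ ++ y₁ → q₁ ∈ A.δ q x₁ y₁ →
    w = x₂ ++ w₂ ++ y₂ → q₂ ∈ A.δ q x₂ y₂ →
    x₁ = x₂ ∧ y₁ = y₂ ∧ w₁ = w₂ ∧ q₁ = q₂

/-- `A` is quasi-deterministic: for every configuration `(q,w)`, whenever
`(q,w) ⇒ (p,u)` and `(q,w) ⇒ (r,v)`, it holds that `p = r`. -/
def QuasiDet (A : WKAutomaton T Q) : Prop :=
  ∀ (q : Q) (w : List T) (p r : Q) (u v : List T),
    A.Step (q, w) (p, u) → A.Step (q, w) (r, v) → p = r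

/-- `A` is state-deterministic: for every state `q` there is at most one state `p`
with `p ∈ δ(q,u,v)` for some words `u`, `v`. -/
def StateDet (A : WKAutomaton T Q) : Prop :=
  ∀ (q p₁ p₂ : Q) (u₁ v₁ u₂ v₂ : List T),
    p₁ ∈ A.δ q u₁ v₁ → p₂ ∈ A.δ q u₂ v₂ → p₁ = p₂

/-- `A` is stateless: `Q = F = {q₀}`. -/
def Stateless (A : WKAutomaton T Q) : Prop :=
  (∀ q : Q, q = A.q0) ∧ A.F = {A.q0}

/-- `A` is all-final: `Q = F`. -/
def AllFinal (A : WKAutomaton T Q) : Prop := A.F = Set.univ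

/-- `A` is simple: at most one head reads in each step. -/
def Simple (A : WKAutomaton T Q) : Prop :=
  ∀ (q : Q) (u v : List T), (A.δ q u v).Nonempty → u = [] ∨ v = []

/-- `A` is 1-limited: exactly one letter is read in each step. -/
def OneLimited (A : WKAutomaton T Q) : Prop :=
  ∀ (q : Q) (u v : List T), (A.δ q u v).Nonempty →
    (u = [] ∧ v.length = 1) ∨ (u.length = 1 ∧ v = [])

end WKAutomaton

/-- Equality of languages modulo the empty word. -/
def EqModLambda {T : Type} (L₁ L₂ : Set (List T)) : Prop :=
  ∀ w : List T, w ≠ [] → (w ∈ L₁ ↔ w ∈ L₂)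

/-- `L` is accepted (modulo the empty word) by some sensing 5'→3' WK automaton
with a finite state set satisfying the property `P`. -/
def AcceptsWith (T : Type) (P : ∀ Q : Type, WKAutomaton T Q → Prop)
    (L : Set (List T)) : Prop :=
  ∃ (Q : Type) (_ : Finite Q) (A : WKAutomaton T Q), P Q A ∧ EqModLambda A.Lang L

/-- The language `ba* + a*`. -/
def Lba : Set (List Letter) :=
  {w | (∃ n : ℕ, w = b :: List.replicate n a) ∨ (∃ n : ℕ, w = List.replicate n a)}


namespace WKProof

inductive St : Type
  | s | qa | qb
deriving DecidableEq

instance instFintypeSt : Fintype St :=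
  ⟨{St.s, St.qa, St.qb}, fun x => by cases x <;> simp⟩

/-- Transition function of the witness automaton. -/
def d : St → List Letter → List Letter → Set St
  | .s, [Letter.a], [] => {St.qa}
  | .s, [Letter.b], [] => {St.qb}
  | .qa, [Letter.a], [] => {St.qa}
  | .qb, [Letter.a], [] => {St.qb}
  | _, _, _ => ∅

lemma d_mem (p q : St) (x y : List Letter) :
    p ∈ d q x y ↔
      (q = .s ∧ x = [a] ∧ y = [] ∧ p = .qa) ∨
      (q = .s ∧ x = [b] ∧ y = [] ∧ p = .qb) ∨
      (q = .qa ∧ x = [a] ∧ y = [] ∧ p = .qa) ∨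
      (q = .qb ∧ x = [a] ∧ y = [] ∧ p = .qb) := by
  cases q <;> rcases x with _ | ⟨_ | _, _ | ⟨_, _⟩⟩ <;> rcases y with _ | ⟨_, _⟩ <;>
    simp [d]

lemma d_finite :
    {t : St × List Letter × List Letter | (d t.1 t.2.1 t.2.2).Nonempty}.Finite := by
  have hfin : ({(St.s, ([a], ([] : List Letter))), (St.s, ([b], [])), (St.qa, ([a], [])),
      (St.qb, ([a], []))} : Set (St × List Letter × List Letter)).Finite :=
    (((Set.finite_singleton _).insert _).insert _).insert _
  apply Set.Finite.subset hfin
  rintro ⟨q, x, y⟩ ⟨p, hp⟩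
  rw [d_mem] at hp
  rcases hp with ⟨h1, h2, h3, _⟩ | ⟨h1, h2, h3, _⟩ | ⟨h1, h2, h3, _⟩ | ⟨h1, h2, h3, _⟩ <;>
    subst h1 <;> subst h2 <;> subst h3 <;> simp

/-- The witness qDF1 automaton. -/
def M : WKAutomaton Letter St where
  q0 := .s
  F := Set.univ
  δ := d
  finite_delta := d_finite

lemma chain_a (q : St) (hq : q ∈ d q [a] []) :
    ∀ n : ℕ, Relation.ReflTransGen M.Step (q, List.replicate n a) (q, []) := by
  intro n
  induction n with
  | zero => exact Relation.ReflTransGen.refl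
  | succ n ih =>
    exact Relation.ReflTransGen.head (b := (q, List.replicate n a))
      ⟨[a], [], by simp [List.replicate_succ], hq⟩ ih

lemma lba_sub : ∀ w ∈ Lba, w ∈ M.Lang := by
  rintro w (⟨n, rfl⟩ | ⟨n, rfl⟩)
  · exact ⟨.qb, Set.mem_univ _,
      Relation.ReflTransGen.head (b := (St.qb, List.replicate n a))
        ⟨[b], [], by simp, by simp [M, d_mem]⟩
        (chain_a .qb (by simp [d_mem]) n)⟩
  · cases n with
    | zero => exact ⟨.s, Set.mem_univ _, Relation.ReflTransGen.refl⟩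
    | succ n =>
      exact ⟨.qa, Set.mem_univ _,
        Relation.ReflTransGen.head (b := (St.qa, List.replicate n a))
          ⟨[a], [], by simp [List.replicate_succ], by simp [M, d_mem]⟩
          (chain_a .qa (by simp [d_mem]) n)⟩

lemma inv (qf : St) (c : St × List Letter)
    (h : Relation.ReflTransGen M.Step c (qf, [])) :
    (c.1 = .s → c.2 ∈ Lba) ∧ (c.1 ≠ .s → ∃ n, c.2 = List.replicate n a) := by
  induction h using Relation.ReflTransGen.head_induction_on with
  | refl => exact ⟨fun _ => Or.inr ⟨0, rfl⟩, fun _ => ⟨0, rfl⟩⟩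
  | head hstep htail ih =>
    obtain ⟨x, y, hw, hm⟩ := hstep
    rw [show M.δ = d from rfl, d_mem] at hm
    rcases hm with ⟨h1, rfl, rfl, h4⟩ | ⟨h1, rfl, rfl, h4⟩ | ⟨h1, rfl, rfl, h4⟩ |
      ⟨h1, rfl, rfl, h4⟩
    · obtain ⟨n, hn⟩ := ih.2 (by rw [h4]; simp)
      exact ⟨fun _ => Or.inr ⟨n + 1, by rw [hw, hn]; simp [List.replicate_succ]⟩,
        fun hq => absurd h1 hq⟩
    · obtain ⟨n, hn⟩ := ih.2 (by rw [h4]; simp)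
      exact ⟨fun _ => Or.inl ⟨n, by rw [hw, hn]; simp⟩, fun hq => absurd h1 hq⟩
    · obtain ⟨n, hn⟩ := ih.2 (by rw [h4]; simp)
      refine ⟨fun hq => ?_, fun _ => ⟨n + 1, by rw [hw, hn]; simp [List.replicate_succ]⟩⟩
      rw [h1] at hq; exact St.noConfusion hq
    · obtain ⟨n, hn⟩ := ih.2 (by rw [h4]; simp)
      refine ⟨fun hq => ?_, fun _ => ⟨n + 1, by rw [hw, hn]; simp [List.replicate_succ]⟩⟩
      rw [h1] at hq; exact St.noConfusion hq

lemma lang_sub : ∀ w ∈ M.Lang, w ∈ Lba := by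
  rintro w ⟨qf, -, h⟩
  exact (inv qf (M.q0, w) h).1 rfl

lemma M_quasi : M.QuasiDet := by
  intro q w p r u v hs1 hs2
  obtain ⟨x1, y1, h1, m1⟩ := hs1
  obtain ⟨x2, y2, h2, m2⟩ := hs2
  rw [show M.δ = d from rfl, d_mem] at m1 m2
  rcases m1 with ⟨a1, rfl, rfl, rfl⟩ | ⟨a1, rfl, rfl, rfl⟩ | ⟨a1, rfl, rfl, rfl⟩ |
      ⟨a1, rfl, rfl, rfl⟩ <;>
    rcases m2 with ⟨a2, rfl, rfl, rfl⟩ | ⟨a2, rfl, rfl, rfl⟩ | ⟨a2, rfl, rfl, rfl⟩ |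
      ⟨a2, rfl, rfl, rfl⟩ <;>
    simp_all

lemma M_one : M.OneLimited := by
  rintro q u v ⟨p, hp⟩
  rw [show M.δ = d from rfl, d_mem] at hp
  rcases hp with ⟨_, rfl, rfl, _⟩ | ⟨_, rfl, rfl, _⟩ | ⟨_, rfl, rfl, _⟩ | ⟨_, rfl, rfl, _⟩ <;>
    simp

section StatelessLemmas

variable {T Q : Type} (A : WKAutomaton T Q)

lemma stateless_lang_step (hst : A.Stateless) {w u x y : List T}
    (hw : w = x ++ u ++ y) (hne : (A.δ A.q0 x y).Nonempty) (hu : u ∈ A.Lang) :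
    w ∈ A.Lang := by
  obtain ⟨qf, hqf, hchain⟩ := hu
  obtain ⟨p, hp⟩ := hne
  exact ⟨qf, hqf, Relation.ReflTransGen.head ⟨x, y, hw, (hst.1 p) ▸ hp⟩ hchain⟩

lemma consume (hst : A.Stateless) (t : T) (qf : Q) :
    ∀ c : Q × List T, Relation.ReflTransGen A.Step c (qf, []) → c.2 = [t] →
      (A.δ A.q0 [t] []).Nonempty ∨ (A.δ A.q0 [] [t]).Nonempty := by
  intro c h
  induction h using Relation.ReflTransGen.head_induction_on with
  | refl => intro hc; simp at hc
  | head hstep htail ih =>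
    intro hc
    rename_i a' c'
    obtain ⟨x, y, hw, hm⟩ := hstep
    rw [hc] at hw
    have hq : a'.1 = A.q0 := hst.1 _
    rw [hq] at hm
    rcases x with _ | ⟨tx, x⟩
    · rcases hmid : c'.2 with _ | ⟨tm, m⟩
      · rw [hmid] at hw
        rcases y with _ | ⟨ty, y⟩
        · simp at hw
        · simp at hw
          obtain ⟨rfl, rfl⟩ := hw
          exact Or.inr ⟨_, hm⟩
      · rw [hmid] at hw
        simp at hw
        obtain ⟨rfl, hm0, hy0⟩ := hw
        subst hm0
        exact ih hmid
    · simp at hw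
      obtain ⟨rfl, hx0, hm0, hy0⟩ := hw
      rw [hx0, hy0] at hm
      exact Or.inl ⟨_, hm⟩

end StatelessLemmas

lemma not_mem_rep (l : List Letter) (hb : Letter.b ∈ l) :
    ∀ n, l ≠ List.replicate n a := by
  intro n h
  subst h
  exact absurd (List.eq_of_mem_replicate hb) (by simp)

end WKProof

open WKProof

/-- The class of languages accepted by quasi-deterministic all-final 1-limited
(qDF1) sensing 5'→3' WK automata properly includes the class of languages
accepted by quasi-deterministic stateless 1-limited (qDN1) sensing 5'→3' WK
automata: every stateless automaton is all-final (so every qDN1 automaton is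
a qDF1 automaton), and `ba* + a*` is accepted by a qDF1 sensing 5'→3' WK
automaton but by no quasi-deterministic stateless sensing 5'→3' WK automaton. -/
theorem qDN1_proper_subset_qDF1 :
    (∀ (T Q : Type) (A : WKAutomaton T Q), A.Stateless → A.AllFinal) ∧
    (∀ (T : Type) (L : Set (List T)),
      AcceptsWith T (fun _ A => A.QuasiDet ∧ A.Stateless ∧ A.OneLimited) L →
      AcceptsWith T (fun _ A => A.QuasiDet ∧ A.AllFinal ∧ A.OneLimited) L) ∧
    AcceptsWith Letter (fun _ A => A.QuasiDet ∧ A.AllFinal ∧ A.OneLimited) Lba ∧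
    ¬ AcceptsWith Letter (fun _ A => A.QuasiDet ∧ A.Stateless) Lba := by
  have hSF : ∀ (T Q : Type) (A : WKAutomaton T Q), A.Stateless → A.AllFinal := by
    rintro T Q A ⟨h1, h2⟩
    rw [WKAutomaton.AllFinal, h2]
    ext q
    simp [h1 q]
  refine ⟨hSF, ?_, ?_, ?_⟩
  · rintro T L ⟨Q, hQ, A, ⟨hqd, hsl, h1l⟩, heq⟩
    exact ⟨Q, hQ, A, ⟨hqd, hSF T Q A hsl, h1l⟩, heq⟩
  · exact ⟨St, inferInstance, M, ⟨M_quasi, rfl, M_one⟩,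
      fun w _ => ⟨fun h => lang_sub w h, fun h => lba_sub w h⟩⟩
  · rintro ⟨Q, hQ, A, ⟨hqd, hsl⟩, heq⟩
    have hbmem : ([b] : List Letter) ∈ A.Lang :=
      (heq [b] (by simp)).2 (Or.inl ⟨0, rfl⟩)
    obtain ⟨qf, hqf, hchain⟩ := hbmem
    rcases consume A hsl b qf (A.q0, [b]) hchain rfl with hL | hR
    · have hbb : ([b, b] : List Letter) ∈ A.Lang :=
        stateless_lang_step A hsl (show [b, b] = [b] ++ [b] ++ [] by rfl) hL
          ((heq [b] (by simp)).2 (Or.inl ⟨0, rfl⟩))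
      have hbb' := (heq [b, b] (by simp)).1 hbb
      rcases hbb' with ⟨n, hn⟩ | ⟨n, hn⟩
      · simp only [List.cons.injEq] at hn
        exact not_mem_rep [b] (by simp) n hn.2
      · exact not_mem_rep [b, b] (by simp) n hn
    · have hab : ([a, b] : List Letter) ∈ A.Lang :=
        stateless_lang_step A hsl (show [a, b] = [] ++ [a] ++ [b] by rfl) hR
          ((heq [a] (by simp)).2 (Or.inr ⟨1, rfl⟩))
      have hab' := (heq [a, b] (by simp)).1 hab
      rcases hab' with ⟨n, hn⟩ | ⟨n, hn⟩
      · simp only [List.cons.injEq] at hn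
        exact Letter.noConfusion hn.1
      · exact not_mem_rep [a, b] (by simp) n hn
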